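/- Let ℋ₁ and ℋ₂ be complex Hilbert spaces, and let P : ℋ₁ → ℋ₂ and Q : ℋ₂ → ℋ₁ be densely defined operators such that (Pu, v)_{ℋ₂} = (u, Qv)_{ℋ₁} for all u ∈ dom(P) and v ∈ dom(Q). Let 𝒯 be the operator on the Hilbert space ℋ₁ ⊕ ℋ₂ with domain dom(P) ⊕ dom(Q) given by 𝒯(u₁, u₂) = (Qu₂, Pu₁). Then the following are equivalent: (i) the closure of P equals the Hilbert-space adjoint Q* of Q, and the closure of Q equals the Hilbert-space adjoint P* of P; (ii) 𝒯 is essentially self-adjoint on dom(P) ⊕ dom(Q), i.e. the closure of 𝒯 is a self-adjoint operator on ℋ₁ ⊕ ℋ₂. -/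

import Mathlib

open scoped InnerProductSpace

section Aux

variable {E F : Type*}
  [NormedAddCommGroup E] [InnerProductSpace ℂ E] [CompleteSpace E]
  [NormedAddCommGroup F] [InnerProductSpace ℂ F] [CompleteSpace F]

omit [CompleteSpace F] in
lemma aux_mem_adjoint_graph {T : E →ₗ.[ℂ] F} (hT : Dense (T.domain : Set E)) {y : F} {w : E} :
    (y, w) ∈ T.adjoint.graph ↔ ∀ x : T.domain, ⟪w, (x : E)⟫_ℂ = ⟪y, T x⟫_ℂ := by
  constructor
  · intro h
    rw [LinearPMap.mem_graph_iff] at h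
    obtain ⟨a, ha1, ha2⟩ := h
    intro x
    simp only at ha1 ha2
    rw [← ha2, ← ha1]
    exact LinearPMap.adjoint_isFormalAdjoint hT a x
  · intro h
    have hy : y ∈ T.adjoint.domain := LinearPMap.mem_adjoint_domain_of_exists _ ⟨w, h⟩
    have hw : T.adjoint ⟨y, hy⟩ = w := LinearPMap.adjoint_apply_eq hT _ h
    rw [LinearPMap.mem_graph_iff]
    exact ⟨⟨y, hy⟩, rfl, hw⟩

omit [CompleteSpace F] in
lemma aux_mem_adjoint_graph' {T : E →ₗ.[ℂ] F} (hT : Dense (T.domain : Set E)) {y : F} {w : E} :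
    (y, w) ∈ T.adjoint.graph ↔ ∀ p ∈ T.graph, ⟪w, p.1⟫_ℂ = ⟪y, p.2⟫_ℂ := by
  rw [aux_mem_adjoint_graph hT]
  constructor
  · intro h p hp
    rw [LinearPMap.mem_graph_iff] at hp
    obtain ⟨a, ha1, ha2⟩ := hp
    rw [← ha1, ← ha2]
    exact h a
  · intro h x
    exact h (x, T x) (T.mem_graph x)

omit [CompleteSpace F] in
lemma aux_adjoint_isClosed {T : E →ₗ.[ℂ] F} (hT : Dense (T.domain : Set E)) :
    T.adjoint.IsClosed := by
  have hset : (T.adjoint.graph : Set (F × E)) =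
      ⋂ p ∈ T.graph, {q : F × E | ⟪q.2, p.1⟫_ℂ = ⟪q.1, p.2⟫_ℂ} := by
    ext ⟨y, w⟩
    simp only [SetLike.mem_coe, Set.mem_iInter, Set.mem_setOf_eq]
    exact aux_mem_adjoint_graph' hT
  rw [LinearPMap.IsClosed, hset]
  refine isClosed_biInter fun p _ => isClosed_eq ?_ ?_
  · exact Continuous.inner continuous_snd continuous_const
  · exact Continuous.inner continuous_fst continuous_const

omit [CompleteSpace E] [CompleteSpace F] in
lemma aux_closure_dense {T : E →ₗ.[ℂ] F} (hT : Dense (T.domain : Set E)) :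
    Dense (T.closure.domain : Set E) :=
  hT.mono T.le_closure.1

omit [CompleteSpace F] in
lemma aux_adjoint_closure {T : E →ₗ.[ℂ] F} (hT : Dense (T.domain : Set E))
    (hc : T.IsClosable) : T.closure.adjoint = T.adjoint := by
  apply LinearPMap.eq_of_eq_graph
  ext ⟨y, w⟩
  rw [aux_mem_adjoint_graph' (aux_closure_dense hT), aux_mem_adjoint_graph' hT]
  constructor
  · intro h p hp
    exact h p (LinearPMap.le_graph_of_le T.le_closure hp)
  · intro h p hp
    have hcl : (p : E × F) ∈ closure (T.graph : Set (E × F)) := by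
      rw [← hc.graph_closure_eq_closure_graph] at hp
      exact hp
    have hS : IsClosed {q : E × F | ⟪w, q.1⟫_ℂ = ⟪y, q.2⟫_ℂ} :=
      isClosed_eq (Continuous.inner continuous_const continuous_fst)
        (Continuous.inner continuous_const continuous_snd)
    exact hS.closure_subset_iff.mpr (fun q hq => h q hq) hcl

lemma aux_selfadjoint_closure_iff {T : E →ₗ.[ℂ] E} (hT : Dense (T.domain : Set E))
    (hc : T.IsClosable) : IsSelfAdjoint T.closure ↔ T.adjoint = T.closure := by
  rw [LinearPMap.isSelfAdjoint_def]
  change T.closure.adjoint = T.closure ↔ _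
  rw [aux_adjoint_closure hT hc]

end Aux

/-- Rearranging homeomorphism used for the block operator graph. -/
noncomputable def pairHomeo (H₁ H₂ : Type*) [NormedAddCommGroup H₁] [NormedAddCommGroup H₂] :
    (WithLp 2 (H₁ × H₂) × WithLp 2 (H₁ × H₂)) ≃ₜ ((H₁ × H₂) × (H₂ × H₁)) where
  toFun p := (((WithLp.equiv 2 (H₁ × H₂) p.1).1, (WithLp.equiv 2 (H₁ × H₂) p.2).2),
              ((WithLp.equiv 2 (H₁ × H₂) p.1).2, (WithLp.equiv 2 (H₁ × H₂) p.2).1))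
  invFun q := ((WithLp.equiv 2 (H₁ × H₂)).symm (q.1.1, q.2.1),
               (WithLp.equiv 2 (H₁ × H₂)).symm (q.2.2, q.1.2))
  left_inv p := rfl
  right_inv q := rfl
  continuous_toFun := by
    have he : Continuous (WithLp.equiv 2 (H₁ × H₂)) := WithLp.prod_continuous_ofLp _ _ _
    exact (((he.comp continuous_fst).fst.prodMk (he.comp continuous_snd).snd).prodMk
      ((he.comp continuous_fst).snd.prodMk (he.comp continuous_snd).fst))
  continuous_invFun := by
    have hs : Continuous (WithLp.equiv 2 (H₁ × H₂)).symm :=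
      WithLp.prod_continuous_toLp _ _ _
    exact ((hs.comp (continuous_fst.fst.prodMk continuous_snd.fst)).prodMk
      (hs.comp (continuous_snd.snd.prodMk continuous_fst.snd)))

theorem pair_essentially_selfadjoint_iff {H₁ H₂ : Type*}
    [NormedAddCommGroup H₁] [InnerProductSpace ℂ H₁] [CompleteSpace H₁]
    [NormedAddCommGroup H₂] [InnerProductSpace ℂ H₂] [CompleteSpace H₂]
    (P : H₁ →ₗ.[ℂ] H₂) (Q : H₂ →ₗ.[ℂ] H₁)
    (hP : Dense (P.domain : Set H₁)) (hQ : Dense (Q.domain : Set H₂))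
    (hPQ : ∀ (u : P.domain) (v : Q.domain), ⟪P u, (v : H₂)⟫_ℂ = ⟪(u : H₁), Q v⟫_ℂ)
    (T : WithLp 2 (H₁ × H₂) →ₗ.[ℂ] WithLp 2 (H₁ × H₂))
    (hTdom : T.domain = (P.domain.prod Q.domain).comap
      (WithLp.linearEquiv 2 ℂ (H₁ × H₂)).toLinearMap)
    (hTapp : ∀ (x : T.domain)
      (h₁ : (WithLp.equiv 2 (H₁ × H₂) (x : WithLp 2 (H₁ × H₂))).1 ∈ P.domain)
      (h₂ : (WithLp.equiv 2 (H₁ × H₂) (x : WithLp 2 (H₁ × H₂))).2 ∈ Q.domain),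
      T x = (WithLp.equiv 2 (H₁ × H₂)).symm
        (Q ⟨(WithLp.equiv 2 (H₁ × H₂) (x : WithLp 2 (H₁ × H₂))).2, h₂⟩,
         P ⟨(WithLp.equiv 2 (H₁ × H₂) (x : WithLp 2 (H₁ × H₂))).1, h₁⟩)) :
    (P.closure = Q.adjoint ∧ Q.closure = P.adjoint) ↔ IsSelfAdjoint T.closure := by
  have hPQ' : P.IsFormalAdjoint Q := hPQ
  -- membership in the domain of T
  have hmemT : ∀ z : WithLp 2 (H₁ × H₂), z ∈ T.domain ↔
      (WithLp.equiv 2 (H₁ × H₂) z).1 ∈ P.domain ∧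
      (WithLp.equiv 2 (H₁ × H₂) z).2 ∈ Q.domain := by
    intro z
    rw [hTdom]
    exact Iff.rfl
  -- density of the domain of T
  have hTdense : Dense (T.domain : Set (WithLp 2 (H₁ × H₂))) := by
    have hset : (T.domain : Set (WithLp 2 (H₁ × H₂))) =
        (WithLp.equiv 2 (H₁ × H₂)) ⁻¹' ((P.domain : Set H₁) ×ˢ (Q.domain : Set H₂)) := by
      ext z
      simpa using hmemT z
    rw [dense_iff_closure_eq, hset]
    have heq : ⇑(WithLp.equiv 2 (H₁ × H₂)) =
        ⇑((WithLp.prodContinuousLinearEquiv 2 ℂ H₁ H₂).toHomeomorph) := rfl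
    rw [heq, ← Homeomorph.preimage_closure, (hP.prod hQ).closure_eq, Set.preimage_univ]
  -- inner product splits
  have hinner : ∀ z w : WithLp 2 (H₁ × H₂), ⟪z, w⟫_ℂ =
      ⟪(WithLp.equiv 2 (H₁ × H₂) z).1, (WithLp.equiv 2 (H₁ × H₂) w).1⟫_ℂ +
      ⟪(WithLp.equiv 2 (H₁ × H₂) z).2, (WithLp.equiv 2 (H₁ × H₂) w).2⟫_ℂ :=
    fun z w => WithLp.prod_inner_apply z w
  -- graph of T
  have hgraphT : ∀ a b : WithLp 2 (H₁ × H₂), (a, b) ∈ T.graph ↔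
      (((WithLp.equiv 2 (H₁ × H₂) a).1, (WithLp.equiv 2 (H₁ × H₂) b).2) ∈ P.graph ∧
       ((WithLp.equiv 2 (H₁ × H₂) a).2, (WithLp.equiv 2 (H₁ × H₂) b).1) ∈ Q.graph) := by
    intro a b
    rw [LinearPMap.mem_graph_iff]
    constructor
    · rintro ⟨x, hx1, hx2⟩
      simp only at hx1 hx2
      obtain ⟨h1, h2⟩ := (hmemT x).mp x.2
      have happ := hTapp x h1 h2
      rw [← hx1, ← hx2, happ, Equiv.apply_symm_apply]
      exact ⟨P.mem_graph ⟨_, h1⟩, Q.mem_graph ⟨_, h2⟩⟩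
    · rintro ⟨hPg, hQg⟩
      rw [LinearPMap.mem_graph_iff] at hPg hQg
      obtain ⟨u, hu1, hu2⟩ := hPg
      obtain ⟨v, hv1, hv2⟩ := hQg
      simp only at hu1 hu2 hv1 hv2
      have hmem : a ∈ T.domain := (hmemT a).mpr ⟨hu1 ▸ u.2, hv1 ▸ v.2⟩
      refine ⟨⟨a, hmem⟩, rfl, ?_⟩
      have happ := hTapp ⟨a, hmem⟩ ((hmemT a).mp hmem).1 ((hmemT a).mp hmem).2
      rw [happ, Equiv.symm_apply_eq]
      have he1 : (⟨(WithLp.equiv 2 (H₁ × H₂) a).2, ((hmemT a).mp hmem).2⟩ : Q.domain) = v :=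
        Subtype.ext hv1.symm
      have he2 : (⟨(WithLp.equiv 2 (H₁ × H₂) a).1, ((hmemT a).mp hmem).1⟩ : P.domain) = u :=
        Subtype.ext hu1.symm
      rw [Prod.ext_iff]
      exact ⟨by rw [he1, hv2], by rw [he2, hu2]⟩
  -- T is symmetric
  have hTsym : T.IsFormalAdjoint T := by
    intro x y
    obtain ⟨hx1, hx2⟩ := (hmemT x).mp x.2
    obtain ⟨hy1, hy2⟩ := (hmemT y).mp y.2
    rw [hTapp x hx1 hx2, hTapp y hy1 hy2, hinner, hinner]
    simp only [Equiv.apply_symm_apply]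
    rw [hPQ ⟨_, hx1⟩ ⟨_, hy2⟩]
    have : ⟪Q ⟨_, hx2⟩, (WithLp.equiv 2 (H₁ × H₂) (y : WithLp 2 (H₁ × H₂))).1⟫_ℂ =
        ⟪(WithLp.equiv 2 (H₁ × H₂) (x : WithLp 2 (H₁ × H₂))).2, P ⟨_, hy1⟩⟫_ℂ := by
      rw [← inner_conj_symm, ← hPQ ⟨_, hy1⟩ ⟨_, hx2⟩, inner_conj_symm]
    rw [this]
    ring
  -- closability
  have hTclosable : T.IsClosable :=
    ((aux_adjoint_isClosed hTdense).isClosable).leIsClosable (hTsym.le_adjoint hTdense)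
  have hPclosable : P.IsClosable :=
    ((aux_adjoint_isClosed hQ).isClosable).leIsClosable (hPQ'.symm.le_adjoint hQ)
  have hQclosable : Q.IsClosable :=
    ((aux_adjoint_isClosed hP).isClosable).leIsClosable (hPQ'.le_adjoint hP)
  -- graph of the closure of T
  have hclT : ∀ a b : WithLp 2 (H₁ × H₂), (a, b) ∈ T.closure.graph ↔
      (((WithLp.equiv 2 (H₁ × H₂) a).1, (WithLp.equiv 2 (H₁ × H₂) b).2) ∈ P.closure.graph ∧
       ((WithLp.equiv 2 (H₁ × H₂) a).2, (WithLp.equiv 2 (H₁ × H₂) b).1)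
         ∈ Q.closure.graph) := by
    have hsetT : (T.graph : Set _) = (pairHomeo H₁ H₂) ⁻¹'
        ((P.graph : Set (H₁ × H₂)) ×ˢ (Q.graph : Set (H₂ × H₁))) := by
      ext ⟨a, b⟩
      simpa [pairHomeo, Set.mem_prod] using hgraphT a b
    have hkey : (T.closure.graph : Set _) = (pairHomeo H₁ H₂) ⁻¹'
        ((P.closure.graph : Set (H₁ × H₂)) ×ˢ (Q.closure.graph : Set (H₂ × H₁))) := by
      calc (T.closure.graph : Set _) = closure (T.graph : Set _) := by
            rw [← hTclosable.graph_closure_eq_closure_graph,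
              Submodule.topologicalClosure_coe]
        _ = closure ((pairHomeo H₁ H₂) ⁻¹' (((P.graph : Set (H₁ × H₂))) ×ˢ
              ((Q.graph : Set (H₂ × H₁))))) := by rw [hsetT]
        _ = (pairHomeo H₁ H₂) ⁻¹' closure (((P.graph : Set (H₁ × H₂))) ×ˢ
              ((Q.graph : Set (H₂ × H₁)))) := ((pairHomeo H₁ H₂).preimage_closure _).symm
        _ = (pairHomeo H₁ H₂) ⁻¹' (closure (P.graph : Set (H₁ × H₂)) ×ˢ
              closure (Q.graph : Set (H₂ × H₁))) := by rw [closure_prod_eq]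
        _ = _ := by
              rw [← hPclosable.graph_closure_eq_closure_graph,
                ← hQclosable.graph_closure_eq_closure_graph,
                Submodule.topologicalClosure_coe, Submodule.topologicalClosure_coe]
    intro a b
    have := Set.ext_iff.mp hkey (a, b)
    simpa [pairHomeo, Set.mem_prod] using this
  -- graph of the adjoint of T
  have hadjT : ∀ a b : WithLp 2 (H₁ × H₂), (a, b) ∈ T.adjoint.graph ↔
      (((WithLp.equiv 2 (H₁ × H₂) a).2, (WithLp.equiv 2 (H₁ × H₂) b).1) ∈ P.adjoint.graph ∧
       ((WithLp.equiv 2 (H₁ × H₂) a).1, (WithLp.equiv 2 (H₁ × H₂) b).2)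
         ∈ Q.adjoint.graph) := by
    intro a b
    rw [aux_mem_adjoint_graph hTdense, aux_mem_adjoint_graph hP, aux_mem_adjoint_graph hQ]
    constructor
    · intro h
      constructor
      · intro u
        have hz : ((WithLp.equiv 2 (H₁ × H₂)).symm ((u : H₁), (0 : H₂))) ∈ T.domain := by
          rw [hmemT]
          simpa using ⟨u.2, Q.domain.zero_mem⟩
        have hx := h ⟨_, hz⟩
        obtain ⟨h1, h2⟩ := (hmemT _).mp hz
        rw [hTapp ⟨_, hz⟩ h1 h2, hinner, hinner] at hx
        simp only [Equiv.apply_symm_apply] at hx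
        have hQ0 : Q ⟨(((u : H₁), (0 : H₂)) : H₁ × H₂).2, h2⟩ = 0 := by
          have : (⟨(((u : H₁), (0 : H₂)) : H₁ × H₂).2, h2⟩ : Q.domain) = 0 :=
            Subtype.ext rfl
          rw [this, LinearPMap.map_zero]
        have hPu : P ⟨(((u : H₁), (0 : H₂)) : H₁ × H₂).1, h1⟩ = P u := by
          congr 1
        rw [hQ0, hPu] at hx
        simpa using hx
      · intro v
        have hz : ((WithLp.equiv 2 (H₁ × H₂)).symm ((0 : H₁), (v : H₂))) ∈ T.domain := by
          rw [hmemT]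
          simpa using ⟨P.domain.zero_mem, v.2⟩
        have hx := h ⟨_, hz⟩
        obtain ⟨h1, h2⟩ := (hmemT _).mp hz
        rw [hTapp ⟨_, hz⟩ h1 h2, hinner, hinner] at hx
        simp only [Equiv.apply_symm_apply] at hx
        have hP0 : P ⟨((((0 : H₁), (v : H₂))) : H₁ × H₂).1, h1⟩ = 0 := by
          have : (⟨((((0 : H₁), (v : H₂))) : H₁ × H₂).1, h1⟩ : P.domain) = 0 :=
            Subtype.ext rfl
          rw [this, LinearPMap.map_zero]
        have hQv : Q ⟨((((0 : H₁), (v : H₂))) : H₁ × H₂).2, h2⟩ = Q v := by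
          congr 1
        rw [hP0, hQv] at hx
        simpa using hx
    · rintro ⟨h1, h2⟩ x
      obtain ⟨hx1, hx2⟩ := (hmemT x).mp x.2
      rw [hTapp x hx1 hx2, hinner, hinner]
      simp only [Equiv.apply_symm_apply]
      rw [h1 ⟨_, hx1⟩, h2 ⟨_, hx2⟩]
      ring
  -- put everything together
  rw [aux_selfadjoint_closure_iff hTdense hTclosable]
  constructor
  · rintro ⟨h1, h2⟩
    apply LinearPMap.eq_of_eq_graph
    ext ⟨a, b⟩
    rw [hadjT a b, hclT a b, h1, h2]
    exact and_comm
  · intro h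
    have hG : ∀ a b : WithLp 2 (H₁ × H₂),
        ((a, b) ∈ T.adjoint.graph ↔ (a, b) ∈ T.closure.graph) := fun a b => by rw [h]
    constructor
    · apply LinearPMap.eq_of_eq_graph
      ext ⟨c, d⟩
      have key := hG ((WithLp.equiv 2 (H₁ × H₂)).symm (c, 0))
        ((WithLp.equiv 2 (H₁ × H₂)).symm (0, d))
      rw [hadjT, hclT] at key
      simp only [Equiv.apply_symm_apply] at key
      constructor
      · intro hx
        exact (key.mpr ⟨hx, Q.closure.graph.zero_mem⟩).2
      · intro hx
        exact (key.mp ⟨P.adjoint.graph.zero_mem, hx⟩).1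
    · apply LinearPMap.eq_of_eq_graph
      ext ⟨c, d⟩
      have key := hG ((WithLp.equiv 2 (H₁ × H₂)).symm (0, c))
        ((WithLp.equiv 2 (H₁ × H₂)).symm (d, 0))
      rw [hadjT, hclT] at key
      simp only [Equiv.apply_symm_apply] at key
      constructor
      · intro hx
        exact (key.mpr ⟨P.closure.graph.zero_mem, hx⟩).1
      · intro hx
        exact (key.mp ⟨hx, Q.adjoint.graph.zero_mem⟩).2
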